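/- Assume q_∞ ≠ 1. Let φ = Σ_{p=1}^{n−1} c_p·[U_p] ∈ V satisfy d(φ) = 0, and assume c_p = 0 for every p such that H_p and H_{p+1} are not parallel. If H_i and H_{i+1} are parallel and the band bounded by H_i and H_{i+1} is not resonant, then c_i = 0. -/

import Mathlib

open scoped Classical

noncomputable section

abbrev Pt : Type := ℝ × ℝ

/-- An affine-linear functional `a*x + b*y + c` on `ℝ²` with nonzero linear part. -/
structure AffForm : Type where
  a : ℝ
  b : ℝ
  c : ℝ
  nondeg : a ≠ 0 ∨ b ≠ 0

namespace AffForm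

def eval (f : AffForm) (p : Pt) : ℝ := f.a * p.1 + f.b * p.2 + f.c

def line (f : AffForm) : Set Pt := {p | f.eval p = 0}

def Parallel (f g : AffForm) : Prop := f.a * g.b = f.b * g.a

end AffForm

variable {n : ℕ}

/-- An arrangement: at least two distinct affine lines, not all parallel. -/
def IsArrangement (α : Fin n → AffForm) : Prop :=
  2 ≤ n ∧ (∀ i j : Fin n, i ≠ j → (α i).line ≠ (α j).line) ∧
    ∃ i j : Fin n, ¬ (α i).Parallel (α j)

def complement (α : Fin n → AffForm) : Set Pt := {p | ∀ i, (α i).eval p ≠ 0}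

/-- A chamber: a connected component of the complement of the union of the lines. -/
def IsChamber (α : Fin n → AffForm) (C : Set Pt) : Prop :=
  ∃ p ∈ complement α, C = connectedComponentIn (complement α) p

/-- `Sep(C, C')`: the set of indices `i` such that `α i` is positive on one of `C, C'`
and negative on the other. -/
def SepSet (α : Fin n → AffForm) (C C' : Set Pt) : Finset (Fin n) :=
  Finset.univ.filter fun i =>
    ((∀ p ∈ C, 0 < (α i).eval p) ∧ (∀ p ∈ C', (α i).eval p < 0)) ∨
    ((∀ p ∈ C, (α i).eval p < 0) ∧ (∀ p ∈ C', 0 < (α i).eval p))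

/-- `Δ(C, C') = ∏_{i ∈ Sep(C,C')} r i − ∏_{i ∈ Sep(C,C')} (r i)⁻¹`. -/
def Delta (α : Fin n → AffForm) (r : Fin n → ℂ) (C C' : Set Pt) : ℂ :=
  (∏ i ∈ SepSet α C C', r i) - ∏ i ∈ SepSet α C C', (r i)⁻¹

/-- The open strip between two parallel lines `f.line` and `g.line`. -/
def Strip (f g : AffForm) : Set Pt :=
  {p | ∀ q ∈ g.line,
    (0 < f.eval p ∧ f.eval p < f.eval q) ∨ (f.eval q < f.eval p ∧ f.eval p < 0)}

/-- A band: the open strip between two parallel lines of the arrangement containing no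
other line of the arrangement parallel to them. -/
def IsBand (α : Fin n → AffForm) (B : Set Pt) : Prop :=
  ∃ i j : Fin n, i ≠ j ∧ (α i).Parallel (α j) ∧ B = Strip (α i) (α j) ∧
    ∀ k : Fin n, (α k).Parallel (α i) → (α k).line ∩ B = ∅

/-- The data of a band `B` bounded by the parallel lines `H i` and `H j`, together with its
two unbounded chambers `U1` (= `U_1(B)`) and `U2` (= `U_2(B)`). -/
def BandData (α : Fin n → AffForm) (i j : Fin n) (B U1 U2 : Set Pt) : Prop :=
  i ≠ j ∧ (α i).Parallel (α j) ∧ B = Strip (α i) (α j) ∧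
  (∀ k : Fin n, (α k).Parallel (α i) → (α k).line ∩ B = ∅) ∧
  IsChamber α U1 ∧ IsChamber α U2 ∧ U1 ⊆ B ∧ U2 ⊆ B ∧
  ¬ Bornology.IsBounded U1 ∧ ¬ Bornology.IsBounded U2 ∧ U1 ≠ U2

/-- Coordinates as in the paper: every intersection point of two lines has `x₂ > 0`, line
`H i` meets the `x₁`-axis exactly at `(a i, 0)` with `0 < a 1 < … < a n`, and each
`α i` is negative at the origin. -/
def GoodCoords (α : Fin n → AffForm) (a : Fin n → ℝ) : Prop :=
  (∀ i j : Fin n, i ≠ j → ∀ p : Pt, p ∈ (α i).line → p ∈ (α j).line → 0 < p.2) ∧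
  (∀ i : Fin n, (α i).line ∩ {p : Pt | p.2 = 0} = {((a i : ℝ), (0 : ℝ))}) ∧
  StrictMono a ∧ (∀ i : Fin n, 0 < a i) ∧ ∀ i : Fin n, (α i).eval (0, 0) < 0

/-- `Upos α p = ∩_{i ≤ p} {α_i > 0} ∩ ∩_{i > p} {α_i < 0}` in the 1-indexed convention of
the paper: for `1 ≤ p ≤ n-1` it is the chamber `U_p`, `Upos α 0 = U_0`, and
`Upos α n = U_0^∨`. -/
def Upos (α : Fin n → AffForm) (p : ℕ) : Set Pt :=
  {x : Pt | ∀ i : Fin n, if (i : ℕ) < p then 0 < (α i).eval x else (α i).eval x < 0}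

/-- `ch²(A)`: the chambers other than `U_0, U_1, …, U_{n-1}, U_0^∨`. -/
def ch2 (α : Fin n → AffForm) (chambers : Finset (Set Pt)) : Finset (Set Pt) :=
  chambers.filter fun C => ∀ p ≤ n, C ≠ Upos α p

/-- `d([U_p]) = −Σ_{C ∈ ch², α_p > 0, α_{p+1} < 0 on C} Δ(U_p, C)·[C]
+ Σ_{C ∈ ch², α_p < 0, α_{p+1} > 0 on C} Δ(U_p, C)·[C]`, where `i`, `j` are the indices of
the lines `H_p`, `H_{p+1}` bounding `U_p` and `U = U_p`. -/
def dChain (α : Fin n → AffForm) (chambers : Finset (Set Pt)) (r : Fin n → ℂ)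
    (i j : Fin n) (U : Set Pt) : Set Pt →₀ ℂ :=
  -(∑ C ∈ (ch2 α chambers).filter
      (fun C => (∀ x ∈ C, 0 < (α i).eval x) ∧ ∀ x ∈ C, (α j).eval x < 0),
      Finsupp.single C (Delta α r U C)) +
  ∑ C ∈ (ch2 α chambers).filter
      (fun C => (∀ x ∈ C, (α i).eval x < 0) ∧ ∀ x ∈ C, 0 < (α j).eval x),
      Finsupp.single C (Delta α r U C)

/-! ### Auxiliary material for the proof of Statement 6 -/

/-- The set of points where each `α k` has the sign prescribed by `ε k`. -/
def SignSet (α : Fin n → AffForm) (ε : Fin n → Prop) : Set Pt :=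
  {x : Pt | ∀ k : Fin n, if ε k then 0 < (α k).eval x else (α k).eval x < 0}

lemma eval_continuous (f : AffForm) : Continuous f.eval := by
  unfold AffForm.eval
  fun_prop

lemma signSet_subset_complement (α : Fin n → AffForm) (ε : Fin n → Prop) :
    SignSet α ε ⊆ complement α := by
  intro x hx k
  have := hx k
  by_cases h : ε k <;> simp [h] at this <;> linarith

lemma convex_signSet (α : Fin n → AffForm) (ε : Fin n → Prop) :
    Convex ℝ (SignSet α ε) := by
  have key : ∀ (f : AffForm) (x y : Pt) (s t : ℝ), s + t = 1 →
      f.eval (s • x + t • y) = s * f.eval x + t * f.eval y := by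
    intro f x y s t hst
    simp only [AffForm.eval, Prod.smul_fst, Prod.smul_snd, Prod.fst_add, Prod.snd_add,
      smul_eq_mul]
    linear_combination (-f.c) * hst
  have pos : ∀ (u v s t : ℝ), 0 < u → 0 < v → 0 ≤ s → 0 ≤ t → s + t = 1 →
      0 < s * u + t * v := by
    intro u v s t hu hv hs ht hst
    rcases eq_or_lt_of_le hs with h | h
    · have : t = 1 := by linarith
      subst this; simp [← h, hv]
    · nlinarith [mul_nonneg ht hv.le, mul_pos h hu]
  intro x hx y hy s t hs ht hst
  intro k
  have hxk := hx k
  have hyk := hy k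
  by_cases h : ε k <;> simp only [h, if_true, if_false, Set.mem_setOf_eq] at hxk hyk ⊢ <;>
    rw [key _ _ _ _ _ hst]
  · exact pos _ _ _ _ hxk hyk hs ht hst
  · have := pos _ _ _ _ (neg_pos.mpr hxk) (neg_pos.mpr hyk) hs ht hst
    linarith

lemma sign_const {s : Set Pt} (hs : IsPreconnected s) (f : AffForm)
    (hne : ∀ x ∈ s, f.eval x ≠ 0) {x y : Pt} (hx : x ∈ s) (hy : y ∈ s)
    (h : 0 < f.eval x) : 0 < f.eval y := by
  by_contra hy0
  have hylt : f.eval y < 0 := lt_of_le_of_ne (not_lt.mp hy0) (hne y hy)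
  have := hs.intermediate_value hy hx ((eval_continuous f).continuousOn)
  have h0 : (0:ℝ) ∈ Set.Icc (f.eval y) (f.eval x) := ⟨le_of_lt hylt, le_of_lt h⟩
  obtain ⟨z, hz, hz0⟩ := this h0
  exact hne z hz hz0

/-- A nonempty sign set is a chamber. -/
lemma isChamber_signSet (α : Fin n → AffForm) (ε : Fin n → Prop) (w : Pt)
    (hw : w ∈ SignSet α ε) : IsChamber α (SignSet α ε) := by
  have hsub := signSet_subset_complement α ε
  have hwc : w ∈ complement α := hsub hw
  refine ⟨w, hwc, ?_⟩
  apply Set.Subset.antisymm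
  · exact (convex_signSet α ε).isPreconnected.subset_connectedComponentIn hw hsub
  · intro x hx k
    have hpre : IsPreconnected (connectedComponentIn (complement α) w) :=
      isPreconnected_connectedComponentIn
    have hsub2 : connectedComponentIn (complement α) w ⊆ complement α :=
      connectedComponentIn_subset _ _
    have hne : ∀ y ∈ connectedComponentIn (complement α) w, (α k).eval y ≠ 0 :=
      fun y hy => hsub2 hy k
    have hwmem : w ∈ connectedComponentIn (complement α) w := mem_connectedComponentIn hwc
    have hwk := hw k
    by_cases h : ε k <;> simp only [h, if_true, if_false] at hwk ⊢
    · exact sign_const hpre (α k) hne hwmem hx hwk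
    · by_contra hx0
      have : 0 < (α k).eval x := lt_of_le_of_ne (not_lt.mp hx0) (Ne.symm (hne x hx))
      have := sign_const hpre (α k) hne hx hwmem this
      linarith

lemma not_isBounded_of_big (s : Set Pt) (h : ∀ R : ℝ, ∃ p ∈ s, R < |p.2|) :
    ¬ Bornology.IsBounded s := by
  intro hb
  obtain ⟨C, hC⟩ := (Metric.isBounded_iff_subset_closedBall 0).mp hb
  obtain ⟨p, hp, hpC⟩ := h C
  have := hC hp
  simp [Metric.mem_closedBall] at this
  have h2 : |p.2| ≤ ‖p‖ := by
    have := norm_snd_le p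
    simpa using this
  have h3 : ‖p‖ = dist p 0 := by simp
  linarith

section GeomCore

variable {m : ℕ} (α : Fin (m + 2) → AffForm) (a : Fin (m + 2) → ℝ)

lemma axis_mem (hco : GoodCoords α a) (k : Fin (m+2)) : (α k).eval (a k, 0) = 0 := by
  have : ((a k : ℝ), (0:ℝ)) ∈ (α k).line ∩ {p : Pt | p.2 = 0} := by
    rw [hco.2.1 k]; rfl
  exact this.1

lemma Apos (hco : GoodCoords α a) (k : Fin (m+2)) : 0 < (α k).a := by
  have h0 := hco.2.2.2.2 k
  have hc : (α k).c < 0 := by simpa [AffForm.eval] using h0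
  have hk := axis_mem α a hco k
  simp only [AffForm.eval, mul_zero, add_zero] at hk
  nlinarith [hco.2.2.2.1 k]

lemma eval_axis (hco : GoodCoords α a) (k : Fin (m+2)) (t : ℝ) :
    (α k).eval (t, 0) = (α k).a * (t - a k) := by
  have hk := axis_mem α a hco k
  simp only [AffForm.eval, mul_zero, add_zero] at hk ⊢
  linear_combination hk

lemma parallel_iff (hco : GoodCoords α a) (k l : Fin (m+2)) :
    (α k).Parallel (α l) ↔ (α k).b / (α k).a = (α l).b / (α l).a := by
  rw [div_eq_div_iff (ne_of_gt (Apos α a hco k)) (ne_of_gt (Apos α a hco l))]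
  unfold AffForm.Parallel
  constructor <;> intro h <;> linear_combination -h

/-- `Dder i0 k` = derivative of `eval (α k)` along the direction `(-(α i0).b, (α i0).a)`. -/
def Dder (i0 k : Fin (m+2)) : ℝ := (α k).b * (α i0).a - (α k).a * (α i0).b

lemma Dder_par (i0 k : Fin (m+2)) (h : (α k).Parallel (α i0)) : Dder α i0 k = 0 := by
  unfold Dder; unfold AffForm.Parallel at h; linear_combination -h

lemma Dder_ne (i0 k : Fin (m+2)) (h : ¬ (α k).Parallel (α i0)) : Dder α i0 k ≠ 0 := by
  unfold Dder; unfold AffForm.Parallel at h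
  intro h0; exact h (by linear_combination -h0)

lemma Dder_sign (hco : GoodCoords α a) (i0 k : Fin (m+2)) (h : ¬ (α k).Parallel (α i0)) :
    (0 < Dder α i0 k ↔ a i0 < a k) := by
  have hki : k ≠ i0 := by
    rintro rfl; exact h (mul_comm _ _)
  set A1 := (α k).a; set B1 := (α k).b; set C1 := (α k).c
  set A2 := (α i0).a; set B2 := (α i0).b; set C2 := (α i0).c
  have hE : A1 * B2 - A2 * B1 ≠ 0 := by
    have := Dder_ne α i0 k h
    unfold Dder at this
    intro h0; exact this (by linarith)
  set E := A1 * B2 - A2 * B1 with hEdef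
  set q : Pt := ((B1 * C2 - B2 * C1) / E, (A2 * C1 - A1 * C2) / E) with hq
  have hqk : q ∈ (α k).line := by
    show (α k).eval q = 0
    simp only [AffForm.eval, hq]
    field_simp
    ring
  have hqi : q ∈ (α i0).line := by
    show (α i0).eval q = 0
    simp only [AffForm.eval, hq]
    field_simp
    ring
  have hy := hco.1 k i0 hki q hqk hqi
  have hCk : C1 = -(A1 * a k) := by
    have := axis_mem α a hco k
    simp only [AffForm.eval, mul_zero, add_zero] at this
    linarith
  have hCi : C2 = -(A2 * a i0) := by
    have := axis_mem α a hco i0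
    simp only [AffForm.eval, mul_zero, add_zero] at this
    linarith
  have hnum : A2 * C1 - A1 * C2 = A1 * A2 * (a i0 - a k) := by
    rw [hCk, hCi]; ring
  have hy2 : 0 < (A1 * A2 * (a i0 - a k)) / E := by
    rw [← hnum]; exact hy
  have hA1 : 0 < A1 := Apos α a hco k
  have hA2 : 0 < A2 := Apos α a hco i0
  have hD : Dder α i0 k = -E := by unfold Dder; ring
  rw [hD]
  rw [div_pos_iff] at hy2
  rcases hy2 with ⟨h1, h2⟩ | ⟨h1, h2⟩ <;> constructor <;> intro h' <;>
    nlinarith [mul_pos hA1 hA2]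

lemma mem_strip_of_signs (hco : GoodCoords α a) {j1 j2 : Fin (m+2)}
    (hpar : (α j1).Parallel (α j2)) {x : Pt}
    (h1 : 0 < (α j1).eval x) (h2 : (α j2).eval x < 0) : x ∈ Strip (α j1) (α j2) := by
  intro q hq
  left
  refine ⟨h1, ?_⟩
  have hgq : (α j2).eval q = 0 := hq
  have hA1 := Apos α a hco j1
  have hA2 := Apos α a hco j2
  have key : (α j1).eval x * (α j2).a - (α j2).eval x * (α j1).a
      = (α j1).eval q * (α j2).a - (α j2).eval q * (α j1).a := by
    simp only [AffForm.eval]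
    unfold AffForm.Parallel at hpar
    linear_combination (q.2 - x.2) * hpar
  nlinarith [key, mul_pos (neg_pos.mpr h2) hA1]

lemma dChain_apply (chambers : Finset (Set Pt)) (r : Fin (m+2) → ℂ)
    (I J : Fin (m+2)) (U X : Set Pt) :
    dChain α chambers r I J U X =
      -(if X ∈ (ch2 α chambers).filter
          (fun C => (∀ x ∈ C, 0 < (α I).eval x) ∧ ∀ x ∈ C, (α J).eval x < 0)
        then Delta α r U X else 0) +
      (if X ∈ (ch2 α chambers).filter
          (fun C => (∀ x ∈ C, (α I).eval x < 0) ∧ ∀ x ∈ C, 0 < (α J).eval x)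
        then Delta α r U X else 0) := by
  simp only [dChain, Finsupp.add_apply, Finsupp.neg_apply, Finsupp.finset_sum_apply,
    Finsupp.single_apply]
  rw [Finset.sum_ite_eq', Finset.sum_ite_eq']

end GeomCore

open Fin.NatCast in
/-- (`n = m + 2` lines, `1`-indexed as `H_p ↔ α ↑(p-1)`.) Assume
`q_∞ ≠ 1`. Let `φ = Σ_{p=1}^{n−1} c_p·[U_p] ∈ V` satisfy `d(φ) = 0`, and assume `c_p = 0`
for every `p` such that `H_p` and `H_{p+1}` are not parallel. If `H_i` and `H_{i+1}` are
parallel and the band bounded by `H_i` and `H_{i+1}` is not resonant (i.e.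
`Δ(U_1, U_2) ≠ 0` for its two unbounded chambers), then `c_i = 0`. -/
theorem statement6 {m : ℕ} (α : Fin (m + 2) → AffForm) (a : Fin (m + 2) → ℝ)
    (hA : IsArrangement α) (hco : GoodCoords α a)
    (chambers : Finset (Set Pt)) (hch : ∀ C : Set Pt, C ∈ chambers ↔ IsChamber α C)
    (q r : Fin (m + 2) → ℂ) (hq : ∀ i, q i ≠ 0) (hr0 : ∀ i, r i ≠ 0)
    (hrq : ∀ i, r i ^ 2 = q i)
    (hqinf : (∏ i, q i)⁻¹ ≠ 1)
    (c : ℕ → ℂ)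
    (hker : ∑ p ∈ Finset.Icc 1 (m + 1),
      c p • dChain α chambers r ↑(p - 1) ↑p (Upos α p) = 0)
    (hc0 : ∀ p ∈ Finset.Icc 1 (m + 1), ¬ (α ↑(p - 1)).Parallel (α ↑p) → c p = 0)
    (i : ℕ) (hi1 : 1 ≤ i) (hin : i ≤ m + 1)
    (hpar : (α ↑(i - 1)).Parallel (α ↑i))
    (hnonres : ∀ C1 C2 : Set Pt, IsChamber α C1 → IsChamber α C2 →
      C1 ⊆ Strip (α ↑(i - 1)) (α ↑i) → C2 ⊆ Strip (α ↑(i - 1)) (α ↑i) →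
      ¬ Bornology.IsBounded C1 → ¬ Bornology.IsBounded C2 → C1 ≠ C2 →
      Delta α r C1 C2 ≠ 0) :
    c i = 0 := by
  have hamono : StrictMono a := hco.2.2.1
  have hvp : ∀ p : ℕ, p ≤ m + 1 → ((p : Fin (m+2)) : ℕ) = p := by
    intro p hp; rw [Fin.val_natCast, Nat.mod_eq_of_lt (by omega)]
  have hvi : ((i : Fin (m+2)) : ℕ) = i := hvp i hin
  have hvi1 : (((i-1 : ℕ) : Fin (m+2)) : ℕ) = i - 1 := hvp _ (by omega)
  have hparrefl : ∀ f : AffForm, f.Parallel f := fun f => mul_comm _ _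
  -- `a`-value comparison against index `i`
  have haik : ∀ k : Fin (m+2), (a ↑i < a k ↔ i < (k:ℕ)) := by
    intro k
    rw [hamono.lt_iff_lt, Fin.lt_def, hvi]
  -- sign criterion for Dder at nonparallel lines
  have hDiff : ∀ k : Fin (m+2), ¬ (α k).Parallel (α ↑i) →
      (0 < Dder α ↑i k ↔ i < (k:ℕ)) := by
    intro k hk
    rw [Dder_sign α a hco ↑i k hk, haik]
  have hknei : ∀ k : Fin (m+2), ¬ (α k).Parallel (α ↑i) → (k:ℕ) ≠ i := by
    intro k hk h
    apply hk
    rw [show k = (↑i : Fin (m+2)) from Fin.ext (by rw [hvi]; exact h)]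
    exact hparrefl _
  -- base point on the axis inside the band
  set x0 : ℝ := (a ↑(i-1) + a ↑i) / 2 with hx0def
  have ha1i : a ↑(i-1) < a ↑i := by
    apply hamono
    rw [Fin.lt_def, hvi1, hvi]; omega
  have hu0e : ∀ k : Fin (m+2), (α k).eval (x0, 0) = (α k).a * (x0 - a k) :=
    fun k => eval_axis α a hco k x0
  have hu0 : (x0, (0:ℝ)) ∈ Upos α i := by
    intro k
    by_cases hk : (k:ℕ) < i
    · rw [if_pos hk, hu0e]
      apply mul_pos (Apos α a hco k)
      have : a k ≤ a ↑(i-1) := hamono.monotone (by rw [Fin.le_def, hvi1]; omega)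
      rw [hx0def]; linarith
    · rw [if_neg hk, hu0e]
      apply mul_neg_of_pos_of_neg (Apos α a hco k)
      have : a ↑i ≤ a k := hamono.monotone (by rw [Fin.le_def, hvi]; omega)
      rw [hx0def]; linarith
  -- the ray through the band
  set ρ : ℝ → Pt := fun t => (x0 - t * (α ↑i).b, t * (α ↑i).a) with hρdef
  have hρe : ∀ (k : Fin (m+2)) (t : ℝ),
      (α k).eval (ρ t) = (α k).eval (x0, 0) + t * Dder α ↑i k := by
    intro k t
    simp only [hρdef, AffForm.eval, Dder]
    ring
  have hρ2 : ∀ t : ℝ, (ρ t).2 = t * (α ↑i).a := fun t => rfl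
  -- the lower ray stays in `U_i`
  have hUray : ∀ t : ℝ, t ≤ 0 → ρ t ∈ Upos α i := by
    intro t ht k
    have hu0k := hu0 k
    by_cases hk : (k:ℕ) < i
    · rw [if_pos hk] at hu0k ⊢
      rw [hρe]
      have hDle : Dder α ↑i k ≤ 0 := by
        by_cases hp : (α k).Parallel (α ↑i)
        · rw [Dder_par α ↑i k hp]
        · refine not_lt.mp (fun h0 => ?_)
          have := (hDiff k hp).mp h0
          omega
      nlinarith [mul_nonneg (neg_nonneg.mpr ht) (neg_nonneg.mpr hDle)]
    · rw [if_neg hk] at hu0k ⊢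
      rw [hρe]
      have hDge : 0 ≤ Dder α ↑i k := by
        by_cases hp : (α k).Parallel (α ↑i)
        · rw [Dder_par α ↑i k hp]
        · refine le_of_lt ((hDiff k hp).mpr ?_)
          have := hknei k hp
          omega
      nlinarith [mul_nonneg (neg_nonneg.mpr ht) hDge]
  -- the threshold T
  set T : ℝ := 1 + ∑ k : Fin (m+2),
      |(α k).eval (x0, 0)| / (if (α k).Parallel (α ↑i) then 1 else |Dder α ↑i k|) with hTdef
  have htermnn : ∀ k : Fin (m+2), 0 ≤
      |(α k).eval (x0, 0)| / (if (α k).Parallel (α ↑i) then 1 else |Dder α ↑i k|) := by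
    intro k
    apply div_nonneg (abs_nonneg _)
    by_cases hp : (α k).Parallel (α ↑i) <;> simp [hp] <;> positivity
  have hT1 : 1 ≤ T := by
    rw [hTdef]
    have := Finset.sum_nonneg (fun k (_ : k ∈ Finset.univ) => htermnn k)
    linarith
  have hTbig : ∀ k : Fin (m+2), ¬ (α k).Parallel (α ↑i) →
      |(α k).eval (x0, 0)| < T * |Dder α ↑i k| := by
    intro k hp
    have hDpos : 0 < |Dder α ↑i k| := abs_pos.mpr (Dder_ne α ↑i k hp)
    have hterm : |(α k).eval (x0, 0)| / |Dder α ↑i k| ≤ T - 1 := by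
      have h1 := Finset.single_le_sum (fun k (_ : k ∈ Finset.univ) => htermnn k)
        (Finset.mem_univ k)
      rw [if_neg hp] at h1
      rw [hTdef]; linarith
    have h2 : |(α k).eval (x0, 0)| ≤ (T - 1) * |Dder α ↑i k| :=
      (div_le_iff₀ hDpos).mp hterm
    nlinarith
  -- the sign pattern of the top chamber of the band
  set δ : Fin (m+2) → Prop := fun k =>
    ((α k).Parallel (α ↑i) ∧ (k:ℕ) < i) ∨ (¬ (α k).Parallel (α ↑i) ∧ i < (k:ℕ)) with hδdef
  have hδi1 : δ ↑(i-1) := Or.inl ⟨hpar, by rw [hvi1]; omega⟩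
  have hδi : ¬ δ ↑i := by
    rintro (⟨_, h⟩ | ⟨h, _⟩)
    · rw [hvi] at h; omega
    · exact h (hparrefl _)
  set Cstar : Set Pt := SignSet α δ with hCdef
  -- the upper ray lies in `Cstar`
  have hCray : ∀ t : ℝ, T ≤ t → ρ t ∈ Cstar := by
    intro t ht k
    have htpos : 0 < t := by linarith
    have hu0k := hu0 k
    by_cases hp : (α k).Parallel (α ↑i)
    · by_cases hk : (k:ℕ) < i
      · have hδk : δ k := Or.inl ⟨hp, hk⟩
        rw [if_pos hδk, hρe, Dder_par α ↑i k hp]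
        rw [if_pos hk] at hu0k
        linarith
      · have hδk : ¬ δ k := by
          rintro (⟨_, h⟩ | ⟨h, _⟩)
          · exact hk h
          · exact h hp
        rw [if_neg hδk, hρe, Dder_par α ↑i k hp]
        rw [if_neg hk] at hu0k
        linarith
    · have habs := hTbig k hp
      have hDabs : T * |Dder α ↑i k| ≤ t * |Dder α ↑i k| :=
        mul_le_mul_of_nonneg_right ht (abs_nonneg _)
      by_cases hk : i < (k:ℕ)
      · have hδk : δ k := Or.inr ⟨hp, hk⟩
        have hD : 0 < Dder α ↑i k := (hDiff k hp).mpr hk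
        rw [if_pos hδk, hρe]
        have hDa : |Dder α ↑i k| = Dder α ↑i k := abs_of_pos hD
        rw [hDa] at habs hDabs
        have := neg_abs_le ((α k).eval (x0, 0))
        linarith
      · have hδk : ¬ δ k := by
          rintro (⟨h, _⟩ | ⟨_, h⟩)
          · exact hp h
          · exact hk h
        have hD : Dder α ↑i k < 0 := by
          rcases lt_trichotomy (Dder α ↑i k) 0 with h | h | h
          · exact h
          · exact absurd h (Dder_ne α ↑i k hp)
          · exact absurd ((hDiff k hp).mp h) hk
        rw [if_neg hδk, hρe]
        have hDa : |Dder α ↑i k| = -Dder α ↑i k := abs_of_neg hD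
        rw [hDa] at habs hDabs
        have := le_abs_self ((α k).eval (x0, 0))
        linarith
  set w : Pt := ρ T with hwdef
  have hw : w ∈ Cstar := hCray T le_rfl
  have hwsig := fun k : Fin (m+2) => hw k
  -- a line not parallel to H i exists
  obtain ⟨u, v, huv⟩ := hA.2.2
  have hk0 : ∃ k : Fin (m+2), ¬ (α k).Parallel (α ↑i) := by
    by_contra hcon
    push_neg at hcon
    apply huv
    rw [parallel_iff α a hco u v, (parallel_iff α a hco u ↑i).mp (hcon u),
      (parallel_iff α a hco v ↑i).mp (hcon v)]
  obtain ⟨k₀, hk₀⟩ := hk0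
  have hk0i : (k₀:ℕ) ≠ i := hknei k₀ hk₀
  -- `Upos α i` is a chamber
  have hUS : Upos α i = SignSet α (fun k => (k:ℕ) < i) := by
    unfold Upos SignSet
    ext x
    exact forall_congr' fun k => by by_cases h : (k:ℕ) < i <;> simp [h]
  have hu0' : (x0, (0:ℝ)) ∈ SignSet α (fun k => (k:ℕ) < i) := by rw [← hUS]; exact hu0
  have hUch : IsChamber α (Upos α i) := by
    rw [hUS]; exact isChamber_signSet α _ _ hu0'
  have hCch : IsChamber α Cstar := isChamber_signSet α δ w hw
  -- signs on `Upos α i` and `Cstar` at the two boundary lines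
  have hUsig : ∀ x ∈ Upos α i, 0 < (α ↑(i-1)).eval x ∧ (α ↑i).eval x < 0 := by
    intro x hx
    constructor
    · have := hx ↑(i-1); rw [if_pos (by rw [hvi1]; omega)] at this; exact this
    · have := hx (↑i : Fin (m+2)); rw [if_neg (by rw [hvi]; omega)] at this; exact this
  have hCsig : ∀ x ∈ Cstar, 0 < (α ↑(i-1)).eval x ∧ (α ↑i).eval x < 0 := by
    intro x hx
    constructor
    · have := hx ↑(i-1); rw [if_pos hδi1] at this; exact this
    · have := hx (↑i : Fin (m+2)); rw [if_neg hδi] at this; exact this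
  -- both are contained in the strip
  have hUsub : Upos α i ⊆ Strip (α ↑(i-1)) (α ↑i) := fun x hx =>
    mem_strip_of_signs α a hco hpar (hUsig x hx).1 (hUsig x hx).2
  have hCsub : Cstar ⊆ Strip (α ↑(i-1)) (α ↑i) := fun x hx =>
    mem_strip_of_signs α a hco hpar (hCsig x hx).1 (hCsig x hx).2
  -- both are unbounded
  have hA2 : 0 < (α ↑i).a := Apos α a hco ↑i
  have hUunb : ¬ Bornology.IsBounded (Upos α i) := by
    apply not_isBounded_of_big
    intro R
    set t : ℝ := -(|R| / (α ↑i).a + 1) with htdef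
    have ht : t ≤ 0 := by
      rw [htdef]
      have : 0 ≤ |R| / (α ↑i).a := div_nonneg (abs_nonneg _) hA2.le
      linarith
    refine ⟨ρ t, hUray t ht, ?_⟩
    rw [hρ2]
    have h5 : |t * (α ↑i).a| = (|R| / (α ↑i).a + 1) * (α ↑i).a := by
      rw [htdef, abs_mul, abs_neg, abs_of_nonneg (by positivity), abs_of_pos hA2]
    rw [h5, add_mul, div_mul_cancel₀ _ (ne_of_gt hA2), one_mul]
    have := le_abs_self R
    linarith
  have hCunb : ¬ Bornology.IsBounded Cstar := by
    apply not_isBounded_of_big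
    intro R
    set t : ℝ := max T (|R| / (α ↑i).a + 1) with htdef
    have ht : T ≤ t := le_max_left _ _
    have ht2 : |R| / (α ↑i).a + 1 ≤ t := le_max_right _ _
    have htpos : 0 < t := by
      have : 0 ≤ |R| / (α ↑i).a := div_nonneg (abs_nonneg _) hA2.le
      linarith
    refine ⟨ρ t, hCray t ht, ?_⟩
    rw [hρ2]
    have h5 : |t * (α ↑i).a| = t * (α ↑i).a := abs_of_pos (mul_pos htpos hA2)
    rw [h5]
    have h6 : (|R| / (α ↑i).a + 1) * (α ↑i).a ≤ t * (α ↑i).a :=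
      mul_le_mul_of_nonneg_right ht2 hA2.le
    rw [add_mul, div_mul_cancel₀ _ (ne_of_gt hA2), one_mul] at h6
    have := le_abs_self R
    linarith
  -- they are distinct
  have hneq : Upos α i ≠ Cstar := by
    intro h
    have hu0C : (x0, (0:ℝ)) ∈ Cstar := h ▸ hu0
    have h1 := hu0C k₀
    have h2 := hu0 k₀
    by_cases hki : (k₀:ℕ) < i
    · rw [if_pos hki] at h2
      have hδk : ¬ δ k₀ := by
        rintro (⟨hp, _⟩ | ⟨_, hlt⟩)
        · exact hk₀ hp
        · omega
      rw [if_neg hδk] at h1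
      linarith
    · rw [if_neg hki] at h2
      have hδk : δ k₀ := Or.inr ⟨hk₀, by omega⟩
      rw [if_pos hδk] at h1
      linarith
  -- the non-resonance gives a nonzero Delta
  have hDelta : Delta α r (Upos α i) Cstar ≠ 0 :=
    hnonres (Upos α i) Cstar hUch hCch hUsub hCsub hUunb hCunb hneq
  -- `Cstar` belongs to ch²
  have hCne : ∀ p ≤ m + 2, Cstar ≠ Upos α p := by
    intro p hp heq
    have hwU : w ∈ Upos α p := heq ▸ hw
    have w1 := hwsig ↑(i-1); rw [if_pos hδi1] at w1
    have w2 := hwsig (↑i : Fin (m+2)); rw [if_neg hδi] at w2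
    have e1 := hwU ↑(i-1)
    have e2 := hwU (↑i : Fin (m+2))
    have hp1 : i - 1 < p := by
      by_contra hcon
      rw [if_neg (by rw [hvi1]; exact hcon)] at e1
      linarith
    have hp2 : ¬ (i < p) := by
      intro hcon
      rw [if_pos (by rw [hvi]; exact hcon)] at e2
      linarith
    have hpi : p = i := by omega
    subst hpi
    have e0 := hwU k₀
    have w0 := hwsig k₀
    by_cases hki : (k₀:ℕ) < p
    · rw [if_pos hki] at e0
      have hδk : ¬ δ k₀ := by
        rintro (⟨hpp, _⟩ | ⟨_, hlt⟩)
        · exact hk₀ hpp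
        · omega
      rw [if_neg hδk] at w0
      linarith
    · rw [if_neg hki] at e0
      have hδk : δ k₀ := Or.inr ⟨hk₀, by omega⟩
      rw [if_pos hδk] at w0
      linarith
  have hC2 : Cstar ∈ ch2 α chambers := by
    rw [ch2, Finset.mem_filter]
    exact ⟨(hch Cstar).mpr hCch, hCne⟩
  -- evaluate the kernel relation at `Cstar`
  have h0 := DFunLike.congr_fun hker Cstar
  rw [Finsupp.finset_sum_apply] at h0
  simp only [Finsupp.smul_apply, smul_eq_mul, Finsupp.coe_zero, Pi.zero_apply] at h0
  rw [Finset.sum_eq_single_of_mem i (Finset.mem_Icc.mpr ⟨hi1, hin⟩)] at h0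
  · -- the term at `i` is `c i * (-(Delta (U_i) Cstar))`
    have hF1 : Cstar ∈ (ch2 α chambers).filter
        (fun C => (∀ x ∈ C, 0 < (α ↑(i-1)).eval x) ∧ ∀ x ∈ C, (α ↑i).eval x < 0) := by
      rw [Finset.mem_filter]
      exact ⟨hC2, fun x hx => (hCsig x hx).1, fun x hx => (hCsig x hx).2⟩
    have hF2 : Cstar ∉ (ch2 α chambers).filter
        (fun C => (∀ x ∈ C, (α ↑(i-1)).eval x < 0) ∧ ∀ x ∈ C, 0 < (α ↑i).eval x) := by
      intro hmem
      have h4 := (Finset.mem_filter.mp hmem).2.1 w hw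
      have := (hCsig w hw).1
      linarith
    rw [dChain_apply, if_pos hF1, if_neg hF2, add_zero] at h0
    rcases mul_eq_zero.mp h0 with h | h
    · exact h
    · exact absurd (neg_eq_zero.mp h) hDelta
  · -- all other terms vanish
    intro p hp hpi
    obtain ⟨hp1, hpn⟩ := Finset.mem_Icc.mp hp
    by_cases hcp : (α ↑(p-1)).Parallel (α ↑p)
    · have hvP : ((p : Fin (m+2)) : ℕ) = p := hvp p hpn
      have hvP1 : (((p-1 : ℕ) : Fin (m+2)) : ℕ) = p - 1 := hvp _ (by omega)
      -- the two boundary signs of `Cstar` at `p-1, p` agree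
      have hsign : (0 < (α ↑(p-1)).eval w ∧ 0 < (α ↑p).eval w) ∨
          ((α ↑(p-1)).eval w < 0 ∧ (α ↑p).eval w < 0) := by
        have h1 := hwsig ((p-1 : ℕ) : Fin (m+2))
        have h2 := hwsig ((p : ℕ) : Fin (m+2))
        by_cases hpp : (α ↑p).Parallel (α ↑i)
        · have hpp1 : (α ↑(p-1)).Parallel (α ↑i) := by
            rw [parallel_iff α a hco]
            exact ((parallel_iff α a hco _ _).mp hcp).trans
              ((parallel_iff α a hco _ _).mp hpp)
          rcases Nat.lt_or_ge p i with hlt | hge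
          · rw [if_pos (Or.inl ⟨hpp1, by rw [hvP1]; omega⟩)] at h1
            rw [if_pos (Or.inl ⟨hpp, by rw [hvP]; omega⟩)] at h2
            exact Or.inl ⟨h1, h2⟩
          · have hgt : i < p := by omega
            have hn1 : ¬ δ ((p-1 : ℕ) : Fin (m+2)) := by
              rintro (⟨_, h⟩ | ⟨h, _⟩)
              · rw [hvP1] at h; omega
              · exact h hpp1
            have hn2 : ¬ δ ((p : ℕ) : Fin (m+2)) := by
              rintro (⟨_, h⟩ | ⟨h, _⟩)
              · rw [hvP] at h; omega
              · exact h hpp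
            rw [if_neg hn1] at h1
            rw [if_neg hn2] at h2
            exact Or.inr ⟨h1, h2⟩
        · have hpp1 : ¬ (α ↑(p-1)).Parallel (α ↑i) := by
            intro hc
            apply hpp
            rw [parallel_iff α a hco]
            exact ((parallel_iff α a hco _ _).mp hcp).symm.trans
              ((parallel_iff α a hco _ _).mp hc)
          have hne1 : p - 1 ≠ i := by
            intro h
            apply hpp1
            rw [show ((p-1 : ℕ) : Fin (m+2)) = (↑i : Fin (m+2)) from
              Fin.ext (by rw [hvP1, hvi]; exact h)]
            exact hparrefl _
          have hnep : p ≠ i := hpi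
          rcases Nat.lt_or_ge p i with hlt | hge
          · have hn1 : ¬ δ ((p-1 : ℕ) : Fin (m+2)) := by
              rintro (⟨h, _⟩ | ⟨_, h⟩)
              · exact hpp1 h
              · rw [hvP1] at h; omega
            have hn2 : ¬ δ ((p : ℕ) : Fin (m+2)) := by
              rintro (⟨h, _⟩ | ⟨_, h⟩)
              · exact hpp h
              · rw [hvP] at h; omega
            rw [if_neg hn1] at h1
            rw [if_neg hn2] at h2
            exact Or.inr ⟨h1, h2⟩
          · have hy1 : δ ((p-1 : ℕ) : Fin (m+2)) :=
              Or.inr ⟨hpp1, by rw [hvP1]; omega⟩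
            have hy2 : δ ((p : ℕ) : Fin (m+2)) :=
              Or.inr ⟨hpp, by rw [hvP]; omega⟩
            rw [if_pos hy1] at h1
            rw [if_pos hy2] at h2
            exact Or.inl ⟨h1, h2⟩
      have hn1 : Cstar ∉ (ch2 α chambers).filter
          (fun C => (∀ x ∈ C, 0 < (α ↑(p-1)).eval x) ∧ ∀ x ∈ C, (α ↑p).eval x < 0) := by
        intro hmem
        have h4 := (Finset.mem_filter.mp hmem).2
        rcases hsign with ⟨s1, s2⟩ | ⟨s1, s2⟩
        · linarith [h4.2 w hw]
        · linarith [h4.1 w hw]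
      have hn2 : Cstar ∉ (ch2 α chambers).filter
          (fun C => (∀ x ∈ C, (α ↑(p-1)).eval x < 0) ∧ ∀ x ∈ C, 0 < (α ↑p).eval x) := by
        intro hmem
        have h4 := (Finset.mem_filter.mp hmem).2
        rcases hsign with ⟨s1, s2⟩ | ⟨s1, s2⟩
        · linarith [h4.1 w hw]
        · linarith [h4.2 w hw]
      rw [dChain_apply, if_neg hn1, if_neg hn2, neg_zero, add_zero, mul_zero]
    · rw [hc0 p hp hcp, zero_mul]

end
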